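/- Suppose ((p,p'),(q,q')) is an ordered pair of pairs of integers satisfying the Proposition 5.1 constraints, and set k := p+q and k' := p'+q'; assume in addition that 2·k'^2 > 3·k^2. Then there is exactly one pair (m,m') ∈ {(p,p'),(q,q')} with the following two properties: 2·m'^2 > 3·m^2, and the associated ordered pair of pairs — namely ((q,q'),(−k,−k')) in case (m,m') = (p,p'), respectively ((−k,−k'),(p,p')) in case (m,m') = (q,q') — also satisfies the Proposition 5.1 constraints. -/
import Mathlib


/-- The constraints of Proposition 5.1 on an ordered pair of pairs of integers
`((p,p'),(q,q'))`: (a) `p·q' − q·p' > 0`; (b) `q' − p' > 0` unless `p'` and `q'`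
are both nonzero and of the same sign; (c) for each `(m,m')` among `(p,p')` and
`(q,q')`: if `m < 0` then `2·m'^2 > 3·m^2`, and if `2·m'^2 < 3·m^2` then `m > 0`. -/
def Prop51Constraints (p p' q q' : ℤ) : Prop :=
  0 < p * q' - q * p' ∧
  (0 < p' * q' ∨ 0 < q' - p') ∧
  ((p < 0 → 3 * p ^ 2 < 2 * p' ^ 2) ∧ (2 * p' ^ 2 < 3 * p ^ 2 → 0 < p)) ∧
  ((q < 0 → 3 * q ^ 2 < 2 * q' ^ 2) ∧ (2 * q' ^ 2 < 3 * q ^ 2 → 0 < q))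

/-- Auxiliary quadratic-form contradiction. -/
lemma lemma67_sub (a b q t : ℤ) (ha : 0 < a) (hb : 0 < b) (hq : 0 < q) (hbt : b ≤ t)
    (hY : 3*a^2 < 2*b^2) (hX : 2*t^2 ≤ 3*q^2) (hk : 3*(q-a)^2 < 2*(t-b)^2) : False := by
  have ht : 0 < t := lt_of_lt_of_le hb hbt
  have hW : t*a ≤ q*b := by nlinarith [mul_pos hq hb, mul_pos ht ha, sq_nonneg (q*b - t*a), sq_nonneg (q*b + t*a)]
  have hqa : a ≤ q := by nlinarith [mul_pos ha hb]
  nlinarith [mul_nonneg (by nlinarith : (0:ℤ) ≤ 3*q^2-2*t^2) (by nlinarith : (0:ℤ) ≤ 2*b^2-3*a^2),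
    sq_nonneg (q*b + t*a), sq_nonneg (q*b - t*a), mul_nonneg (sub_nonneg.2 hW) (sub_nonneg.2 hbt),
    mul_nonneg (sub_nonneg.2 hW) (sub_nonneg.2 hqa), mul_nonneg (sub_nonneg.2 hqa) (sub_nonneg.2 hbt),
    mul_pos ha hb, mul_pos hq ht, mul_pos ha ht, mul_pos hq hb]

/-- If `(p,p')` satisfies the quadratic condition but `(q,q')` does not, then
condition (b) for the pair `((q,q'),(−k,−k'))` holds. -/
lemma lemma67_caseA (p s q t : ℤ) (ha : 0 < p*t - q*s) (hb : 0 < s*t ∨ 0 < t - s)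
    (hq1 : q < 0 → 3*q^2 < 2*t^2) (hk : 3*(p+q)^2 < 2*(s+t)^2)
    (hP : 3*p^2 < 2*s^2) (hQ : 2*t^2 ≤ 3*q^2) :
    0 < t * (-(s+t)) ∨ 0 < -(s+t) - t := by
  by_contra hc
  push_neg at hc
  obtain ⟨h1, h2⟩ := hc
  rcases lt_trichotomy t 0 with ht | ht | ht
  · rcases hb with h | h <;> nlinarith
  · rcases hb with h | h <;> nlinarith
  · have hq0 : 0 < q := by
      rcases lt_trichotomy q 0 with h | h | h
      · exact absurd (hq1 h) (by linarith)
      · nlinarith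
      · exact h
    have hst : 0 ≤ s + t := by nlinarith
    rcases le_or_gt s 0 with hs | hs
    · have hpneg : p < 0 := by
        by_contra hp0
        push_neg at hp0
        nlinarith
      have hs' : s < 0 := by nlinarith
      exact lemma67_sub (-p) (-s) q t (by linarith) (by linarith) hq0 (by linarith)
        (by nlinarith) hQ (by nlinarith)
    · have hqs : 0 < q * s := mul_pos hq0 hs
      have hp0 : 0 < p := by nlinarith
      nlinarith [mul_pos hp0 ht, mul_pos (mul_pos hp0 ht) hqs, sq_nonneg (p*t - q*s),
        mul_lt_mul_of_pos_right hP (show (0:ℤ) < q^2 by positivity),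
        mul_le_mul_of_nonneg_left hQ (show (0:ℤ) ≤ p^2 by positivity)]

/-- If both quadratic conditions hold, then condition (b) holds for at least
one of the two new pairs. -/
lemma lemma67_caseBoth (p s q t : ℤ) (hb : 0 < s*t ∨ 0 < t - s) (hk : 3*(p+q)^2 < 2*(s+t)^2) :
    (0 < t * (-(s+t)) ∨ 0 < -(s+t) - t) ∨ (0 < (-(s+t)) * s ∨ 0 < s - (-(s+t))) := by
  by_contra hc
  push_neg at hc
  obtain ⟨⟨h1, h2⟩, h3, h4⟩ := hc
  have ht : 0 ≤ t := by linarith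
  have hs : s ≤ 0 := by linarith
  rcases lt_trichotomy (s + t) 0 with h | h | h
  · rcases hb with hb | hb <;> nlinarith
  · nlinarith
  · rcases hb with hb | hb <;> nlinarith

/-- At least one of the two quadratic conditions holds. -/
lemma lemma67_caseNeither (p s q t : ℤ) (hp1 : p < 0 → 3*p^2 < 2*s^2) (hq1 : q < 0 → 3*q^2 < 2*t^2)
    (hP : 2*s^2 ≤ 3*p^2) (hQ : 2*t^2 ≤ 3*q^2) (hk : 3*(p+q)^2 < 2*(s+t)^2) : False := by
  have hp0 : 0 ≤ p := by by_contra h; push_neg at h; exact absurd (hp1 h) (by linarith)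
  have hq0 : 0 ≤ q := by by_contra h; push_neg at h; exact absurd (hq1 h) (by linarith)
  have h1 : 2*s^2*(2*t^2) ≤ 3*p^2*(3*q^2) :=
    mul_le_mul hP hQ (by positivity) (by positivity)
  have h2 : 0 ≤ 3*(p*q) := by positivity
  have h3 : 2*(s*t) ≤ 3*(p*q) := by nlinarith [h1, h2]
  nlinarith

/-- Condition (b) cannot hold for both new pairs. -/
lemma lemma67_excl (s t : ℤ) (hb : 0 < s * t ∨ 0 < t - s) :
    ¬((0 < t * (-(s + t)) ∨ 0 < -(s + t) - t) ∧
      (0 < (-(s + t)) * s ∨ 0 < s - (-(s + t)))) := by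
  rintro ⟨hA | hA, hB | hB⟩ <;> rcases hb with hb | hb <;>
    nlinarith [sq_nonneg (s+t), sq_nonneg s, sq_nonneg t, sq_nonneg (s-t)]

theorem lemma_6_7 (p p' q q' : ℤ) (h : Prop51Constraints p p' q q')
    (hk : 3 * (p + q) ^ 2 < 2 * (p' + q') ^ 2) :
    ∃! mm' : ℤ × ℤ, (mm' = (p, p') ∨ mm' = (q, q')) ∧
      3 * mm'.1 ^ 2 < 2 * mm'.2 ^ 2 ∧
      (mm' = (p, p') → Prop51Constraints q q' (-(p + q)) (-(p' + q'))) ∧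
      (mm' = (q, q') → Prop51Constraints (-(p + q)) (-(p' + q')) p p') := by
  obtain ⟨ha, hb, ⟨hp1, hp2⟩, ⟨hq1, hq2⟩⟩ := h
  set DA : Prop := (0 < q' * (-(p' + q')) ∨ 0 < -(p' + q') - q') with hDAdef
  set DB : Prop := (0 < (-(p' + q')) * p' ∨ 0 < p' - (-(p' + q'))) with hDBdef
  have hne : ((p, p') : ℤ × ℤ) ≠ (q, q') := by
    simp only [ne_eq, Prod.mk.injEq, not_and]
    intro h1 h2
    subst h1; subst h2
    nlinarith
  have mkA : DA → Prop51Constraints q q' (-(p + q)) (-(p' + q')) := by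
    intro hd
    refine ⟨by nlinarith, hd, ⟨hq1, hq2⟩, fun _ => by nlinarith, fun hcon => by nlinarith⟩
  have mkB : DB → Prop51Constraints (-(p + q)) (-(p' + q')) p p' := by
    intro hd
    refine ⟨by nlinarith, hd, ⟨fun _ => by nlinarith, fun hcon => by nlinarith⟩, hp1, hp2⟩
  have hexcl : ¬(DA ∧ DB) := lemma67_excl p' q' hb
  by_cases hP : 3 * p ^ 2 < 2 * p' ^ 2 <;> by_cases hQ : 3 * q ^ 2 < 2 * q' ^ 2
  · -- both quadratics hold
    rcases lemma67_caseBoth p p' q q' hb hk with hDA | hDB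
    · refine ⟨(p, p'), ⟨Or.inl rfl, hP, fun _ => mkA hDA, fun he => absurd he hne⟩, ?_⟩
      rintro y ⟨(rfl | rfl), hy2, hy3, hy4⟩
      · rfl
      · exact absurd ⟨hDA, (hy4 rfl).2.1⟩ hexcl
    · refine ⟨(q, q'), ⟨Or.inr rfl, hQ, fun he => absurd he.symm hne, fun _ => mkB hDB⟩, ?_⟩
      rintro y ⟨(rfl | rfl), hy2, hy3, hy4⟩
      · exact absurd ⟨(hy3 rfl).2.1, hDB⟩ hexcl
      · rfl
  · -- only (p,p')
    have hDA : DA := lemma67_caseA p p' q q' ha hb hq1 hk hP (by linarith [not_lt.1 hQ])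
    refine ⟨(p, p'), ⟨Or.inl rfl, hP, fun _ => mkA hDA, fun he => absurd he hne⟩, ?_⟩
    rintro y ⟨(rfl | rfl), hy2, hy3, hy4⟩
    · rfl
    · exact absurd hy2 (by simpa using hQ)
  · -- only (q,q')
    have hDB : DB := by
      have hres := lemma67_caseA q (-q') p (-p') (by linarith) ?_ (fun hh => by nlinarith [hp1 hh]) (by nlinarith) (by nlinarith)
        (by nlinarith [not_lt.1 hP])
      · rcases hres with hres | hres
        · exact Or.inl (by nlinarith)
        · exact Or.inr (by linarith)
      · rcases hb with hb | hb
        · exact Or.inl (by nlinarith)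
        · exact Or.inr (by linarith)
    refine ⟨(q, q'), ⟨Or.inr rfl, hQ, fun he => absurd he.symm hne, fun _ => mkB hDB⟩, ?_⟩
    rintro y ⟨(rfl | rfl), hy2, hy3, hy4⟩
    · exact absurd hy2 (by simpa using hP)
    · rfl
  · exact absurd hk (by
      have := lemma67_caseNeither p p' q q' hp1 hq1 (not_lt.1 hP) (not_lt.1 hQ)
      intro hkk
      exact this hkk)
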